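/- The Best-Single-Issue algorithm is a 1/2-approximation for two-candidate binary Max Support with best-case tie-breaking: let OPT be the maximum over all nonempty issue sets S of the number of voters voting for c1 on S, and let h* be the maximum over single issues k of the number of voters voting for c1 on {k}. Then 2·h* ≥ OPT. -/
import Mathlib


/-- Hamming distance restricted to a set of issues. -/
def hamOn {ℓ : ℕ} (S : Finset (Fin ℓ)) (x y : Fin ℓ → Bool) : ℕ :=
  (S.filter (fun k => x k ≠ y k)).card

/-- Number of voters voting for c1 over c2 on issue set S (best-case
tie-breaking). -/
def votes {ℓ n : ℕ} (c1 c2 : Fin ℓ → Bool) (v : Fin n → Fin ℓ → Bool)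
    (S : Finset (Fin ℓ)) : ℕ :=
  (Finset.univ.filter (fun j : Fin n => hamOn S (v j) c1 ≤ hamOn S (v j) c2)).card

/-- Best-Single-Issue is a 1/2-approximation for
two-candidate binary Max Support with best-case tie-breaking: for every
nonempty issue set S there is a single issue k whose vote count is at
least half of the vote count of S; hence 2·h* ≥ OPT. -/
theorem best_single_issue_half_approx
    (ℓ n : ℕ) (c1 c2 : Fin ℓ → Bool) (v : Fin n → Fin ℓ → Bool) :
    ∀ S : Finset (Fin ℓ), S.Nonempty →
      ∃ k : Fin ℓ, votes c1 c2 v S ≤ 2 * votes c1 c2 v {k} := by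
  intro S hS
  by_cases h : ∃ k ∈ S, c1 k = c2 k
  · obtain ⟨k, hk, he⟩ := h
    refine ⟨k, ?_⟩
    have h1 : votes c1 c2 v S ≤ n := by
      have := Finset.card_filter_le (Finset.univ : Finset (Fin n))
        (fun j => hamOn S (v j) c1 ≤ hamOn S (v j) c2)
      simpa [votes] using this
    have h2 : votes c1 c2 v {k} = n := by
      have hall : ∀ j ∈ (Finset.univ : Finset (Fin n)),
          hamOn {k} (v j) c1 ≤ hamOn {k} (v j) c2 := by
        intro j _
        simp [hamOn, Finset.filter_singleton, he]
      simp [votes, Finset.filter_true_of_mem hall]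
    omega
  · push_neg at h
    set T := Finset.univ.filter
      (fun j : Fin n => hamOn S (v j) c1 ≤ hamOn S (v j) c2) with hT
    have hAj : ∀ j ∈ T, S.card ≤ 2 * (S.filter (fun k => v j k = c1 k)).card := by
      intro j hj
      rw [hT, Finset.mem_filter] at hj
      have hsplit : (S.filter (fun k => v j k = c1 k)).card
          + (S.filter (fun k => ¬ v j k = c1 k)).card = S.card :=
        Finset.card_filter_add_card_filter_not (fun k => v j k = c1 k)
      have h2 : hamOn S (v j) c2 = (S.filter (fun k => v j k = c1 k)).card := by
        unfold hamOn
        congr 1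
        apply Finset.filter_congr
        intro k hk
        have hne := h k hk
        cases hv : v j k <;> cases hc1 : c1 k <;> cases hc2 : c2 k <;> simp_all
      have h1 : hamOn S (v j) c1 = (S.filter (fun k => ¬ v j k = c1 k)).card := by
        unfold hamOn; rfl
      have := hj.2
      omega
    have e1 : ∀ k ∈ S, votes c1 c2 v {k}
        = (Finset.univ.filter (fun j : Fin n => v j k = c1 k)).card := by
      intro k hk
      unfold votes
      congr 1
      apply Finset.filter_congr
      intro j _
      have hne := h k hk
      simp only [hamOn, Finset.filter_singleton]
      cases hv : v j k <;> cases hc1 : c1 k <;> cases hc2 : c2 k <;> simp_all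
    have hdouble : ∑ j : Fin n, (S.filter (fun k => v j k = c1 k)).card
        = ∑ k ∈ S, (Finset.univ.filter (fun j : Fin n => v j k = c1 k)).card := by
      simp only [Finset.card_filter]
      exact Finset.sum_comm
    have key : ∑ k ∈ S, votes c1 c2 v S ≤ ∑ k ∈ S, 2 * votes c1 c2 v {k} := by
      have c1' : ∑ k ∈ S, votes c1 c2 v S = S.card * T.card := by
        rw [Finset.sum_const, smul_eq_mul]; rfl
      have c2' : ∑ k ∈ S, 2 * votes c1 c2 v {k}
          = 2 * ∑ k ∈ S, (Finset.univ.filter (fun j : Fin n => v j k = c1 k)).card := by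
        rw [← Finset.mul_sum]
        congr 1
        exact Finset.sum_congr rfl e1
      rw [c1', c2', ← hdouble]
      calc S.card * T.card = ∑ j ∈ T, S.card := by rw [Finset.sum_const, smul_eq_mul, mul_comm]
        _ ≤ ∑ j ∈ T, 2 * (S.filter (fun k => v j k = c1 k)).card := Finset.sum_le_sum hAj
        _ = 2 * ∑ j ∈ T, (S.filter (fun k => v j k = c1 k)).card := (Finset.mul_sum _ _ _).symm
        _ ≤ 2 * ∑ j : Fin n, (S.filter (fun k => v j k = c1 k)).card := by
            exact Nat.mul_le_mul_left 2
              (Finset.sum_le_sum_of_subset (Finset.subset_univ T))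
    obtain ⟨k, hk, hle⟩ := Finset.exists_le_of_sum_le hS key
    exact ⟨k, hle⟩
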